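/- Suppose φ''_F > 0 > φ''_{2F} and φ''_F + 8φ''_{2F} > 0. Then inf_{v ∈ V_0, ‖Dv‖_{ℓ^∞} = 1} sup_{w ∈ V_0, ‖Dw‖_{ℓ^1_ε} = 1} ⟨L^{qcf} v, w⟩ ≥ (1/2)(φ''_F + 8φ''_{2F}). Consequently, for any f, the system L^{qcf} u = f with u ∈ V_0 has a unique solution u satisfying ‖Du‖_{ℓ^∞} ≤ 2‖f‖_* / (φ''_F + 8φ''_{2F}), where ‖f‖_* = sup_{w ∈ V_0, ‖Dw‖_{ℓ^1_ε}=1} ⟨f, w⟩. -/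

import Mathlib

noncomputable def eps (N : ℤ) : ℝ := 1 / (N : ℝ)

noncomputable def Dd (N : ℤ) (v : ℤ → ℝ) (j : ℤ) : ℝ := (v j - v (j-1)) / eps N

noncomputable def L1op (N : ℤ) (v : ℤ → ℝ) (j : ℤ) : ℝ :=
  (-v (j+1) + 2 * v j - v (j-1)) / (eps N)^2

noncomputable def L2op (N K : ℤ) (v : ℤ → ℝ) (j : ℤ) : ℝ :=
  if -K ≤ j ∧ j ≤ K then (-v (j+2) + 2 * v j - v (j-2)) / (eps N)^2
  else 4 * (-v (j+1) + 2 * v j - v (j-1)) / (eps N)^2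

noncomputable def Lqcf (N K : ℤ) (φF φ2F : ℝ) (v : ℤ → ℝ) (j : ℤ) : ℝ :=
  φF * L1op N v j + φ2F * L2op N K v j

/-- `sup_{w ∈ V₀, ‖Dw‖_{ℓ¹_ε} = 1} ⟨g, w⟩`, the dual norm of `g`. -/
noncomputable def dualNorm (N : ℤ) (g : ℤ → ℝ) : ℝ :=
  sSup { y : ℝ | ∃ w : ℤ → ℝ, w (-N) = 0 ∧ w N = 0 ∧
    eps N * ∑ j ∈ Finset.Icc (-N+1) N, |Dd N w j| = 1 ∧
    y = eps N * ∑ j ∈ Finset.Icc (-N) N, g j * w j }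

lemma eps_pos {N : ℤ} (hN : 1 ≤ N) : 0 < eps N := by
  have : (0:ℝ) < (N:ℝ) := by exact_mod_cast lt_of_lt_of_le zero_lt_one hN
  simp [eps]; positivity

lemma Icc_succ_right_int (a b : ℤ) (h : a ≤ b + 1) :
    Finset.Icc a (b+1) = insert (b+1) (Finset.Icc a b) := by
  ext x; simp only [Finset.mem_Icc, Finset.mem_insert]; omega

lemma sum_Icc_top (f : ℤ → ℝ) {a b : ℤ} (h : a ≤ b + 1) :
    ∑ j ∈ Finset.Icc a (b+1), f j = (∑ j ∈ Finset.Icc a b, f j) + f (b+1) := by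
  rw [Icc_succ_right_int a b h, Finset.sum_insert (by simp)]; ring

lemma sum_Icc_concat (f : ℤ → ℝ) (a b c : ℤ) (h1 : a ≤ b + 1) (h2 : b ≤ c) :
    ∑ j ∈ Finset.Icc a c, f j
      = (∑ j ∈ Finset.Icc a b, f j) + ∑ j ∈ Finset.Icc (b+1) c, f j := by
  rw [← Finset.sum_union]
  · congr 1; ext x; simp only [Finset.mem_Icc, Finset.mem_union]; omega
  · rw [Finset.disjoint_left]; intro x hx hx'
    simp only [Finset.mem_Icc] at hx hx'; omega

lemma teleD (f : ℤ → ℝ) (a : ℤ) : ∀ b : ℤ, a ≤ b →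
    ∑ i ∈ Finset.Icc (a+1) b, (f i - f (i-1)) = f b - f a := by
  refine Int.le_induction ?_ ?_
  · simp
  · intro n hn ih
    rw [sum_Icc_top _ (by omega), ih]; ring

lemma tele1 (v : ℤ → ℝ) (a : ℤ) : ∀ b : ℤ, a ≤ b →
    ∑ j ∈ Finset.Icc a (b-1), (-v (j+1) + 2 * v j - v (j-1))
      = (v a - v (a-1)) - (v b - v (b-1)) := by
  refine Int.le_induction ?_ ?_
  · simp
  · intro n hn ih
    have h1 : n + 1 - 1 = (n - 1) + 1 := by ring
    rw [h1, sum_Icc_top _ (by omega)]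
    have h2 : n - 1 + 1 = n := by ring
    rw [h2, ih]; ring

lemma tele2 (v : ℤ → ℝ) (a : ℤ) : ∀ b : ℤ, a ≤ b →
    ∑ j ∈ Finset.Icc a (b-1), (-v (j+2) + 2 * v j - v (j-2))
      = (v a - v (a-2)) + (v (a+1) - v (a-1)) - (v b - v (b-2)) - (v (b+1) - v (b-1)) := by
  refine Int.le_induction ?_ ?_
  · simp
  · intro n hn ih
    have h1 : n + 1 - 1 = (n - 1) + 1 := by ring
    rw [h1, sum_Icc_top _ (by omega)]
    have h2 : n - 1 + 1 = n := by ring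
    rw [h2, ih]
    have e1 : n + 1 - 2 = n - 1 := by ring
    have e2 : n + 1 + 1 = n + 2 := by ring
    rw [e1, e2]; ring

lemma G_R (N K : ℤ) (φF φ2F : ℝ) (v : ℤ → ℝ) (hN : 1 ≤ N)
    (a : ℤ) (ha : K+1 ≤ a) (ha' : a ≤ N) :
    eps N * ∑ j ∈ Finset.Icc a (N-1), Lqcf N K φF φ2F v j
      = (φF + 4*φ2F) * (Dd N v a - Dd N v N) := by
  have hε := (eps_pos hN).ne'
  have hrw : ∀ j ∈ Finset.Icc a (N-1), Lqcf N K φF φ2F v j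
      = ((φF + 4*φ2F)/(eps N)^2) * (-v (j+1) + 2*v j - v (j-1)) := by
    intro j hj; simp only [Finset.mem_Icc] at hj
    have hc : ¬(-K ≤ j ∧ j ≤ K) := by omega
    simp only [Lqcf, L1op, L2op, if_neg hc]; field_simp
  rw [Finset.sum_congr rfl hrw, ← Finset.mul_sum, tele1 v a N (by omega)]
  simp only [Dd]; field_simp

lemma G_A (N K : ℤ) (φF φ2F : ℝ) (v : ℤ → ℝ) (hN : 1 ≤ N) (hK : 2 ≤ K) (hKN : 2*K ≤ N)
    (a : ℤ) (ha : -K ≤ a) (ha' : a ≤ K) :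
    eps N * ∑ j ∈ Finset.Icc a (N-1), Lqcf N K φF φ2F v j
      = φF * (Dd N v a - Dd N v N)
        + φ2F * ((Dd N v (a-1) + 2*Dd N v a + Dd N v (a+1))
            - (Dd N v K - 2*Dd N v (K+1) + Dd N v (K+2)) - 4*Dd N v N) := by
  have hε := (eps_pos hN).ne'
  have hKN2 : K ≤ N - 2 := by omega
  rw [sum_Icc_concat _ a K (N-1) (by omega) (by omega)]
  have hrw1 : ∀ j ∈ Finset.Icc a K, Lqcf N K φF φ2F v j
      = (φF/(eps N)^2) * (-v (j+1) + 2*v j - v (j-1))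
        + (φ2F/(eps N)^2) * (-v (j+2) + 2*v j - v (j-2)) := by
    intro j hj; simp only [Finset.mem_Icc] at hj
    have hc : -K ≤ j ∧ j ≤ K := by omega
    simp only [Lqcf, L1op, L2op, if_pos hc]; field_simp
  have hrw2 : ∀ j ∈ Finset.Icc (K+1) (N-1), Lqcf N K φF φ2F v j
      = ((φF + 4*φ2F)/(eps N)^2) * (-v (j+1) + 2*v j - v (j-1)) := by
    intro j hj; simp only [Finset.mem_Icc] at hj
    have hc : ¬(-K ≤ j ∧ j ≤ K) := by omega
    simp only [Lqcf, L1op, L2op, if_neg hc]; field_simp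
  rw [Finset.sum_congr rfl hrw1, Finset.sum_congr rfl hrw2, Finset.sum_add_distrib,
    ← Finset.mul_sum, ← Finset.mul_sum, ← Finset.mul_sum]
  have e1 : (K:ℤ) = (K+1) - 1 := by ring
  rw [show Finset.Icc a K = Finset.Icc a (K+1-1) from by norm_num,
    tele1 v a (K+1) (by omega), tele2 v a (K+1) (by omega),
    tele1 v (K+1) N (by omega)]
  simp only [Dd]
  have e2 : a - 1 - 1 = a - 2 := by ring
  have e3 : a + 1 - 1 = a := by ring
  have e4 : K + 1 - 2 = K - 1 := by ring
  have e5 : K + 1 + 1 = K + 2 := by ring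
  have e6 : K + 1 - 1 = K := by ring
  have e7 : K + 2 - 1 = K + 1 := by ring
  rw [e2, e3, e4, e5, e6, e7]
  field_simp; ring

lemma G_L (N K : ℤ) (φF φ2F : ℝ) (v : ℤ → ℝ) (hN : 1 ≤ N) (hK : 2 ≤ K) (hKN : 2*K ≤ N)
    (a : ℤ) (ha : -N+1 ≤ a) (ha' : a ≤ -K-1) :
    eps N * ∑ j ∈ Finset.Icc a (N-1), Lqcf N K φF φ2F v j
      = (φF + 4*φ2F) * (Dd N v a - Dd N v N)
        + φ2F * ((Dd N v (-K-1) - 2*Dd N v (-K) + Dd N v (-K+1))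
            - (Dd N v K - 2*Dd N v (K+1) + Dd N v (K+2))) := by
  have hε := (eps_pos hN).ne'
  rw [sum_Icc_concat _ a (-K-1) (N-1) (by omega) (by omega),
    show (-K-1+1 : ℤ) = -K from by ring,
    sum_Icc_concat _ (-K) K (N-1) (by omega) (by omega)]
  have hrw1 : ∀ j ∈ Finset.Icc a (-K-1), Lqcf N K φF φ2F v j
      = ((φF + 4*φ2F)/(eps N)^2) * (-v (j+1) + 2*v j - v (j-1)) := by
    intro j hj; simp only [Finset.mem_Icc] at hj
    have hc : ¬(-K ≤ j ∧ j ≤ K) := by omega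
    simp only [Lqcf, L1op, L2op, if_neg hc]; field_simp
  have hrw2 : ∀ j ∈ Finset.Icc (-K) K, Lqcf N K φF φ2F v j
      = (φF/(eps N)^2) * (-v (j+1) + 2*v j - v (j-1))
        + (φ2F/(eps N)^2) * (-v (j+2) + 2*v j - v (j-2)) := by
    intro j hj; simp only [Finset.mem_Icc] at hj
    have hc : -K ≤ j ∧ j ≤ K := by omega
    simp only [Lqcf, L1op, L2op, if_pos hc]; field_simp
  have hrw3 : ∀ j ∈ Finset.Icc (K+1) (N-1), Lqcf N K φF φ2F v j
      = ((φF + 4*φ2F)/(eps N)^2) * (-v (j+1) + 2*v j - v (j-1)) := by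
    intro j hj; simp only [Finset.mem_Icc] at hj
    have hc : ¬(-K ≤ j ∧ j ≤ K) := by omega
    simp only [Lqcf, L1op, L2op, if_neg hc]; field_simp
  rw [Finset.sum_congr rfl hrw1, Finset.sum_congr rfl hrw2, Finset.sum_congr rfl hrw3,
    Finset.sum_add_distrib, ← Finset.mul_sum, ← Finset.mul_sum, ← Finset.mul_sum,
    ← Finset.mul_sum]
  rw [show Finset.Icc a (-K-1) = Finset.Icc a (-K-1) from rfl]
  rw [show (-K-1 : ℤ) = -K - 1 from rfl]
  rw [show Finset.Icc a (-K-1) = Finset.Icc a ((-K)-1) from by norm_num,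
    tele1 v a (-K) (by omega),
    show Finset.Icc (-K) K = Finset.Icc (-K) ((K+1)-1) from by norm_num,
    tele1 v (-K) (K+1) (by omega), tele2 v (-K) (K+1) (by omega),
    tele1 v (K+1) N (by omega)]
  simp only [Dd]
  have e2 : -K - 1 - 1 = -K - 2 := by ring
  have e2' : -K - 2 = -K - 2 := rfl
  have e3 : -K + 1 - 1 = -K := by ring
  have e4 : K + 1 - 2 = K - 1 := by ring
  have e5 : K + 1 + 1 = K + 2 := by ring
  have e6 : K + 1 - 1 = K := by ring
  have e7 : K + 2 - 1 = K + 1 := by ring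
  rw [e2, e3, e4, e5, e6, e7]
  field_simp; ring

lemma Dd_eq {N : ℤ} (hN : 1 ≤ N) (v : ℤ → ℝ) (j : ℤ) : v j - v (j-1) = eps N * Dd N v j := by
  have : eps N ≠ 0 := (eps_pos hN).ne'
  rw [Dd, mul_div_assoc']; exact (mul_div_cancel_left₀ _ this).symm

/-- The set appearing in `dualNorm` is bounded above. -/
lemma dual_bddAbove (N : ℤ) (hN : 1 ≤ N) (g : ℤ → ℝ) :
    BddAbove { y : ℝ | ∃ w : ℤ → ℝ, w (-N) = 0 ∧ w N = 0 ∧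
      eps N * ∑ j ∈ Finset.Icc (-N+1) N, |Dd N w j| = 1 ∧
      y = eps N * ∑ j ∈ Finset.Icc (-N) N, g j * w j } := by
  have hε := eps_pos hN
  refine ⟨eps N * ∑ j ∈ Finset.Icc (-N) N, |g j|, ?_⟩
  rintro y ⟨w, hw0, hw1, hnorm, rfl⟩
  have hwb : ∀ j ∈ Finset.Icc (-N) N, |w j| ≤ 1 := by
    intro j hj; simp only [Finset.mem_Icc] at hj
    have htel : ∑ i ∈ Finset.Icc (-N+1) j, (w i - w (i-1)) = w j - w (-N) :=
      teleD w (-N) j (by omega)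
    have hsum : w j = eps N * ∑ i ∈ Finset.Icc (-N+1) j, Dd N w i := by
      rw [Finset.mul_sum]
      have : ∀ i ∈ Finset.Icc (-N+1) j, eps N * Dd N w i = w i - w (i-1) := by
        intro i _; rw [Dd_eq hN]
      rw [Finset.sum_congr rfl this, htel, hw0, sub_zero]
    rw [hsum, abs_mul, abs_of_pos hε]
    have s1 : |∑ i ∈ Finset.Icc (-N+1) j, Dd N w i|
        ≤ ∑ i ∈ Finset.Icc (-N+1) j, |Dd N w i| := Finset.abs_sum_le_sum_abs _ _
    have s2 : ∑ i ∈ Finset.Icc (-N+1) j, |Dd N w i|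
        ≤ ∑ i ∈ Finset.Icc (-N+1) N, |Dd N w i| := by
      apply Finset.sum_le_sum_of_subset_of_nonneg
      · intro i hi; simp only [Finset.mem_Icc] at hi ⊢; omega
      · exact fun i _ _ => abs_nonneg _
    nlinarith [hnorm, mul_le_mul_of_nonneg_left s1 hε.le, mul_le_mul_of_nonneg_left s2 hε.le]
  have termwise : ∀ j ∈ Finset.Icc (-N) N, g j * w j ≤ |g j| := by
    intro j hj
    calc g j * w j ≤ |g j * w j| := le_abs_self _
      _ = |g j| * |w j| := abs_mul _ _
      _ ≤ |g j| * 1 := mul_le_mul_of_nonneg_left (hwb j hj) (abs_nonneg _)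
      _ = |g j| := mul_one _
  exact mul_le_mul_of_nonneg_left (Finset.sum_le_sum termwise) hε.le

/-- Membership: step test functions. -/
lemma dual_mem (N : ℤ) (hN : 1 ≤ N) (g : ℤ → ℝ) (a b : ℤ)
    (ha : -N+1 ≤ a) (hab : a < b) (hb : b ≤ N) (σ : ℝ) (hσ : σ = 1/2 ∨ σ = -(1/2)) :
    σ * (eps N * ∑ j ∈ Finset.Icc a (b-1), g j) ∈
      { y : ℝ | ∃ w : ℤ → ℝ, w (-N) = 0 ∧ w N = 0 ∧
        eps N * ∑ j ∈ Finset.Icc (-N+1) N, |Dd N w j| = 1 ∧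
        y = eps N * ∑ j ∈ Finset.Icc (-N) N, g j * w j } := by
  have hε := eps_pos hN
  set w : ℤ → ℝ := fun j => if a ≤ j ∧ j ≤ b - 1 then σ else 0 with hw
  have hwval : ∀ j, w j = if a ≤ j ∧ j ≤ b - 1 then σ else 0 := fun j => rfl
  have hDd : ∀ j, j ≠ a → j ≠ b → Dd N w j = 0 := by
    intro j hja hjb
    have : w j = w (j-1) := by
      rw [hwval, hwval]
      by_cases h : a ≤ j ∧ j ≤ b - 1
      · rw [if_pos h, if_pos (by omega)]
      · rw [if_neg h, if_neg (by omega)]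
    simp [Dd, this]
  have hDa : Dd N w a = σ / eps N := by
    have h1 : w a = σ := by rw [hwval, if_pos (by omega)]
    have h2 : w (a-1) = 0 := by rw [hwval, if_neg (by omega)]
    simp [Dd, h1, h2]
  have hDb : Dd N w b = -σ / eps N := by
    have h1 : w b = 0 := by rw [hwval, if_neg (by omega)]
    have h2 : w (b-1) = σ := by rw [hwval, if_pos (by omega)]
    simp [Dd, h1, h2]
  refine ⟨w, ?_, ?_, ?_, ?_⟩
  · rw [hwval, if_neg (by omega)]
  · rw [hwval, if_neg (by omega)]
  · have hsub : ({a, b} : Finset ℤ) ⊆ Finset.Icc (-N+1) N := by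
      intro x hx; simp only [Finset.mem_insert, Finset.mem_singleton] at hx
      rcases hx with rfl | rfl <;> (simp only [Finset.mem_Icc]; omega)
    rw [← Finset.sum_subset hsub (by
      intro x hx hnx
      simp only [Finset.mem_insert, Finset.mem_singleton] at hnx
      push_neg at hnx
      rw [hDd x hnx.1 hnx.2, abs_zero])]
    rw [Finset.sum_pair (by omega : a ≠ b), hDa, hDb]
    have hσabs : |σ| = 1/2 := by rcases hσ with rfl | rfl <;> simp
    rw [abs_div, abs_div, hσabs, abs_neg, hσabs, abs_of_pos hε]
    field_simp; ring
  · have hsub : Finset.Icc a (b-1) ⊆ Finset.Icc (-N) N := by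
      intro x hx; simp only [Finset.mem_Icc] at hx ⊢; omega
    rw [← Finset.sum_subset hsub (by
      intro x _ hnx
      simp only [Finset.mem_Icc] at hnx
      have : w x = 0 := by rw [hwval, if_neg (by omega)]
      rw [this, mul_zero])]
    have : ∀ j ∈ Finset.Icc a (b-1), g j * w j = σ * g j := by
      intro j hj; simp only [Finset.mem_Icc] at hj
      rw [hwval, if_pos (by omega)]; ring
    rw [Finset.sum_congr rfl this, ← Finset.mul_sum]; ring

lemma dualNorm_nonneg (N : ℤ) (hN : 1 ≤ N) (g : ℤ → ℝ) : 0 ≤ dualNorm N g := by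
  have h1 := dual_mem N hN g (-N+1) N (le_refl _) (by omega) (le_refl _) (1/2) (Or.inl rfl)
  have h2 := dual_mem N hN g (-N+1) N (le_refl _) (by omega) (le_refl _) (-(1/2)) (Or.inr rfl)
  have hb := dual_bddAbove N hN g
  set P := eps N * ∑ j ∈ Finset.Icc (-N+1) (N-1), g j
  have l1 : (1/2) * P ≤ dualNorm N g := le_csSup hb h1
  have l2 : (-(1/2)) * P ≤ dualNorm N g := le_csSup hb h2
  nlinarith [l1, l2]

/-- Key lower bound on the dual norm via a pair of indices. -/
lemma pair_lb (N : ℤ) (hN : 1 ≤ N) (g : ℤ → ℝ) (a b : ℤ) (γ' : ℝ)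
    (ha : -N+1 ≤ a) (hab : a < b) (hb : b ≤ N)
    (h : γ' ≤ |eps N * ∑ j ∈ Finset.Icc a (b-1), g j|) :
    γ' / 2 ≤ dualNorm N g := by
  have hbd := dual_bddAbove N hN g
  set P := eps N * ∑ j ∈ Finset.Icc a (b-1), g j with hP
  rcases le_or_gt 0 P with hp | hp
  · have hle : (1/2) * P ≤ dualNorm N g :=
      le_csSup hbd (dual_mem N hN g a b ha hab hb (1/2) (Or.inl rfl))
    rw [abs_of_nonneg hp] at h; linarith
  · have hle : (-(1/2)) * P ≤ dualNorm N g :=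
      le_csSup hbd (dual_mem N hN g a b ha hab hb (-(1/2)) (Or.inr rfl))
    rw [abs_of_neg hp] at h; linarith

lemma pairG (N K : ℤ) (φF φ2F : ℝ) (v : ℤ → ℝ) (hN : 1 ≤ N) (a b : ℤ) (γ' : ℝ)
    (ha : -N+1 ≤ a) (ha' : a ≤ N) (hb : -N+1 ≤ b) (hb' : b ≤ N) (hne : a ≠ b)
    (h : γ' ≤ eps N * ∑ j ∈ Finset.Icc a (N-1), Lqcf N K φF φ2F v j
          - eps N * ∑ j ∈ Finset.Icc b (N-1), Lqcf N K φF φ2F v j) :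
    γ' / 2 ≤ dualNorm N (Lqcf N K φF φ2F v) := by
  rcases lt_or_gt_of_ne hne with hlt | hgt
  · have hsplit := sum_Icc_concat (Lqcf N K φF φ2F v) a (b-1) (N-1) (by omega) (by omega)
    rw [show (b-1+1 : ℤ) = b from by ring] at hsplit
    apply pair_lb N hN _ a b γ' ha hlt hb'
    have : eps N * ∑ j ∈ Finset.Icc a (b-1), Lqcf N K φF φ2F v j
        = eps N * ∑ j ∈ Finset.Icc a (N-1), Lqcf N K φF φ2F v j
          - eps N * ∑ j ∈ Finset.Icc b (N-1), Lqcf N K φF φ2F v j := by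
      rw [hsplit]; ring
    rw [this]
    exact le_trans h (le_abs_self _)
  · have hsplit := sum_Icc_concat (Lqcf N K φF φ2F v) b (a-1) (N-1) (by omega) (by omega)
    rw [show (a-1+1 : ℤ) = a from by ring] at hsplit
    apply pair_lb N hN _ b a γ' hb hgt ha'
    have : eps N * ∑ j ∈ Finset.Icc b (a-1), Lqcf N K φF φ2F v j
        = -(eps N * ∑ j ∈ Finset.Icc a (N-1), Lqcf N K φF φ2F v j
          - eps N * ∑ j ∈ Finset.Icc b (N-1), Lqcf N K φF φ2F v j) := by
      rw [hsplit]; ring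
    rw [this, abs_neg]
    exact le_trans h (le_abs_self _)

/-- Core stability estimate, assuming the max is attained with value `+1`. -/
lemma key_pos (N K : ℤ) (hN : 1 ≤ N) (hK : 2 ≤ K) (hKN : 2 * K ≤ N)
    (φF φ2F : ℝ) (hF : 0 < φF) (h2F : φ2F < 0) (hstab : 0 < φF + 8 * φ2F)
    (v : ℤ → ℝ) (hv0 : v (-N) = 0) (hv1 : v N = 0)
    (hb : ∀ j ∈ Finset.Icc (-N+1) N, |Dd N v j| ≤ 1)
    (hex : ∃ j0 ∈ Finset.Icc (-N+1) N, Dd N v j0 = 1) :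
    (1/2) * (φF + 8 * φ2F) ≤ dualNorm N (Lqcf N K φF φ2F v) := by
  obtain ⟨j0, hj0mem, hj0⟩ := hex
  simp only [Finset.mem_Icc] at hj0mem
  set d : ℤ → ℝ := Dd N v with hd
  have hε := eps_pos hN
  -- the discrete gradient sums to zero
  have hsum0 : ∑ j ∈ Finset.Icc (-N+1) N, d j = 0 := by
    have htel : ∑ i ∈ Finset.Icc (-N+1) N, (v i - v (i-1)) = v N - v (-N) :=
      teleD v (-N) N (by omega)
    have : ∀ i ∈ Finset.Icc (-N+1) N, d i = (v i - v (i-1)) / eps N := fun i _ => rfl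
    rw [Finset.sum_congr rfl this, ← Finset.sum_div, htel, hv0, hv1]
    simp
  -- the minimum of d
  obtain ⟨j1, hj1mem, hj1min⟩ := Finset.exists_min_image (Finset.Icc (-N+1) N) d
    ⟨N, by simp only [Finset.mem_Icc]; omega⟩
  simp only [Finset.mem_Icc] at hj1mem
  have hmin : ∀ x : ℤ, -N+1 ≤ x → x ≤ N → d j1 ≤ d x := by
    intro x h1 h2; exact hj1min x (by simp only [Finset.mem_Icc]; omega)
  have hm0 : d j1 ≤ 0 := by
    by_contra hpos
    push_neg at hpos
    have : 0 < ∑ j ∈ Finset.Icc (-N+1) N, d j := by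
      apply Finset.sum_pos
      · intro i hi
        exact lt_of_lt_of_le hpos (hj1min i hi)
      · exact ⟨N, by simp only [Finset.mem_Icc]; omega⟩
    linarith [hsum0, this]
  have hbd : ∀ x : ℤ, -N+1 ≤ x → x ≤ N → -1 ≤ d x ∧ d x ≤ 1 := by
    intro x h1 h2
    have := hb x (by simp only [Finset.mem_Icc]; omega)
    exact abs_le.mp this
  have hm1 : -1 ≤ d j1 := (hbd j1 hj1mem.1 hj1mem.2).1
  have hKN2 : K + 2 ≤ N := by omega
  -- useful bounds at interface points
  have hKm := hbd K (by omega) (by omega)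
  have hK1m := hbd (K+1) (by omega) (by omega)
  have hK2m := hbd (K+2) (by omega) (by omega)
  have hmKm := hbd (-K) (by omega) (by omega)
  have hmK1m := hbd (-K-1) (by omega) (by omega)
  have hmK2m := hbd (-K+1) (by omega) (by omega)
  have hKmin := hmin K (by omega) (by omega)
  have hK1min := hmin (K+1) (by omega) (by omega)
  have hK2min := hmin (K+2) (by omega) (by omega)
  have hmKmin := hmin (-K) (by omega) (by omega)
  have hmK1min := hmin (-K-1) (by omega) (by omega)
  have hmK2min := hmin (-K+1) (by omega) (by omega)
  have hj0ne : j0 ≠ j1 := by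
    intro h; rw [h] at hj0; linarith
  have hc : 0 < φF + 4 * φ2F := by linarith
  have GR := fun a ha ha' => G_R N K φF φ2F v hN a ha ha'
  have GA := fun a ha ha' => G_A N K φF φ2F v hN hK hKN a ha ha'
  have GLm := fun a ha ha' => G_L N K φF φ2F v hN hK hKN a ha ha'
  rw [show (1/2) * (φF + 8 * φ2F) = (φF + 8 * φ2F)/2 from by ring]
  -- region case split
  rcases le_or_gt j0 (-K-1) with c0L | c0R
  · -- j0 ∈ L
    rcases le_or_gt j1 (-K-1) with c1L | c1R
    · -- (L,L)
      apply pairG N K φF φ2F v hN j0 j1 (φF + 8 * φ2F) (by omega) (by omega) (by omega) (by omega) hj0ne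
      rw [GLm j0 (by omega) (by omega), GLm j1 (by omega) (by omega), ← hd, hj0]
      have p2 : 0 ≤ (-(d j1)) * (φF + 4*φ2F) := mul_nonneg (by linarith) (by linarith)
      linarith [p2, h2F]
    rcases le_or_gt j1 K with c1A | c1R'
    · -- (L,A)
      apply pairG N K φF φ2F v hN j0 j1 (φF + 8 * φ2F) (by omega) (by omega) (by omega) (by omega) hj0ne
      rw [GLm j0 (by omega) (by omega), GA j1 (by omega) (by omega), ← hd, hj0]
      have hb1 : d (j1-1) + 2 * d j1 + d (j1+1) ≥ 4 * d j1 := by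
        have h1 := hmin (j1-1) (by omega) (by omega)
        have h2 := hmin (j1+1) (by omega) (by omega)
        linarith
      have hgL : d (-K-1) - 2 * d (-K) + d (-K+1) ≤ 2 - 2 * d j1 := by
        have := hmKmin; have := hmK1m.2; have := hmK2m.2; linarith
      have q1 : φ2F * (2 - 2*d j1) ≤ φ2F * (d (-K-1) - 2*d (-K) + d (-K+1)) :=
        mul_le_mul_of_nonpos_left hgL h2F.le
      have q2 : φ2F * (d (j1-1) + 2*d j1 + d (j1+1)) ≤ φ2F * (4*d j1) :=
        mul_le_mul_of_nonpos_left hb1 h2F.le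
      have p2 : 0 ≤ (-(d j1)) * (φF + 6*φ2F) := mul_nonneg (by linarith) (by linarith)
      linarith [q1, q2, p2, h2F]
    · -- (L,R)
      rcases le_or_gt 0 (d (-K)) with hs | hs
      · -- use pair (j0, j1)
        apply pairG N K φF φ2F v hN j0 j1 (φF + 8 * φ2F) (by omega) (by omega) (by omega) (by omega) hj0ne
        rw [GLm j0 (by omega) (by omega), GR j1 (by omega) (by omega), ← hd, hj0]
        have hgR : d K - 2 * d (K+1) + d (K+2) ≥ 2 * d j1 - 2 * d (K+1) := by
          have := hKmin; have := hK2min; linarith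
        have hgL : d (-K-1) - 2 * d (-K) + d (-K+1) ≤ 2 - 2 * d (-K) := by
          have := hmK1m.2; have := hmK2m.2; linarith
        have q1 : φ2F * (d K - 2*d (K+1) + d (K+2)) ≤ φ2F * (2*d j1 - 2*d (K+1)) :=
          mul_le_mul_of_nonpos_left hgR h2F.le
        have q2 : φ2F * (2 - 2*d (-K)) ≤ φ2F * (d (-K-1) - 2*d (-K) + d (-K+1)) :=
          mul_le_mul_of_nonpos_left hgL h2F.le
        have p2 : 0 ≤ (-(d j1)) * (φF + 6*φ2F) := mul_nonneg (by linarith) (by linarith)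
        have p3 : 0 ≤ (-φ2F) * (d (-K)) := mul_nonneg (by linarith) hs
        have p4 : 0 ≤ (-φ2F) * (1 - d (K+1)) := mul_nonneg (by linarith) (by linarith [hK1m.2])
        linarith [q1, q2, p2, p3, p4]
      · -- use pair (j0, -K)
        apply pairG N K φF φ2F v hN j0 (-K) (φF + 8 * φ2F) (by omega) (by omega) (by omega) (by omega)
          (by omega)
        rw [GLm j0 (by omega) (by omega), GA (-K) (by omega) (by omega), ← hd, hj0]
        have p : 0 ≤ (-(d (-K))) * (φF + 4*φ2F) := mul_nonneg (by linarith) (by linarith)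
        linarith [p, h2F]
  rcases le_or_gt j0 K with c0A | c0R'
  · -- j0 ∈ A
    have hb0 : d (j0-1) + 2*1 + d (j0+1) ≤ 4 := by
      have h1 := (hbd (j0-1) (by omega) (by omega)).2
      have h2 := (hbd (j0+1) (by omega) (by omega)).2
      linarith
    rcases le_or_gt j1 (-K-1) with c1L | c1R
    · -- (A,L)
      apply pairG N K φF φ2F v hN j0 j1 (φF + 8 * φ2F) (by omega) (by omega) (by omega) (by omega) hj0ne
      rw [GA j0 (by omega) (by omega), GLm j1 (by omega) (by omega), ← hd, hj0]
      have hgL : d (-K-1) - 2 * d (-K) + d (-K+1) ≥ 2 * d j1 - 2 := by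
        have := hmK1min; have := hmK2min; have := hmKm.2; linarith
      have q1 : φ2F * 4 ≤ φ2F * (d (j0-1) + 2*1 + d (j0+1)) :=
        mul_le_mul_of_nonpos_left hb0 h2F.le
      have q2 : φ2F * (d (-K-1) - 2*d (-K) + d (-K+1)) ≤ φ2F * (2*d j1 - 2) :=
        mul_le_mul_of_nonpos_left hgL h2F.le
      have p2 : 0 ≤ (-(d j1)) * (φF + 6*φ2F) := mul_nonneg (by linarith) (by linarith)
      linarith [q1, q2, p2, h2F, hj0]
    rcases le_or_gt j1 K with c1A | c1R'
    · -- (A,A)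
      apply pairG N K φF φ2F v hN j0 j1 (φF + 8 * φ2F) (by omega) (by omega) (by omega) (by omega) hj0ne
      rw [GA j0 (by omega) (by omega), GA j1 (by omega) (by omega), ← hd, hj0]
      have hb1 : d (j1-1) + 2 * d j1 + d (j1+1) ≥ 4 * d j1 := by
        have h1 := hmin (j1-1) (by omega) (by omega)
        have h2 := hmin (j1+1) (by omega) (by omega)
        linarith
      have q1 : φ2F * 4 ≤ φ2F * (d (j0-1) + 2*1 + d (j0+1)) :=
        mul_le_mul_of_nonpos_left hb0 h2F.le
      have q2 : φ2F * (d (j1-1) + 2*d j1 + d (j1+1)) ≤ φ2F * (4*d j1) :=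
        mul_le_mul_of_nonpos_left hb1 h2F.le
      have p2 : 0 ≤ (-(d j1)) * (φF + 4*φ2F) := mul_nonneg (by linarith) (by linarith)
      linarith [q1, q2, p2, h2F, hj0]
    · -- (A,R)
      apply pairG N K φF φ2F v hN j0 j1 (φF + 8 * φ2F) (by omega) (by omega) (by omega) (by omega) hj0ne
      rw [GA j0 (by omega) (by omega), GR j1 (by omega) (by omega), ← hd, hj0]
      have hgR : d K - 2 * d (K+1) + d (K+2) ≥ 2 * d j1 - 2 := by
        have := hKmin; have := hK2min; have := hK1m.2; linarith
      have q1 : φ2F * 4 ≤ φ2F * (d (j0-1) + 2*1 + d (j0+1)) :=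
        mul_le_mul_of_nonpos_left hb0 h2F.le
      have q2 : φ2F * (d K - 2*d (K+1) + d (K+2)) ≤ φ2F * (2*d j1 - 2) :=
        mul_le_mul_of_nonpos_left hgR h2F.le
      have p2 : 0 ≤ (-(d j1)) * (φF + 6*φ2F) := mul_nonneg (by linarith) (by linarith)
      linarith [q1, q2, p2, h2F, hj0]
  · -- j0 ∈ R
    rcases le_or_gt j1 (-K-1) with c1L | c1R
    · -- (R,L)
      rcases le_or_gt 0 (d (K+1)) with ht | ht
      · apply pairG N K φF φ2F v hN j0 j1 (φF + 8 * φ2F) (by omega) (by omega) (by omega) (by omega) hj0ne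
        rw [GR j0 (by omega) (by omega), GLm j1 (by omega) (by omega), ← hd, hj0]
        have hgR : d K - 2 * d (K+1) + d (K+2) ≤ 2 - 2 * d (K+1) := by
          have := hKm.2; have := hK2m.2; linarith
        have hgL : d (-K-1) - 2 * d (-K) + d (-K+1) ≥ 2 * d j1 - 2 := by
          have := hmK1min; have := hmK2min; have := hmKm.2; linarith
        have q1 : φ2F * (2 - 2*d (K+1)) ≤ φ2F * (d K - 2*d (K+1) + d (K+2)) :=
          mul_le_mul_of_nonpos_left hgR h2F.le
        have q2 : φ2F * (d (-K-1) - 2*d (-K) + d (-K+1)) ≤ φ2F * (2*d j1 - 2) :=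
          mul_le_mul_of_nonpos_left hgL h2F.le
        have p2 : 0 ≤ (-(d j1)) * (φF + 6*φ2F) := mul_nonneg (by linarith) (by linarith)
        have p3 : 0 ≤ (-φ2F) * (d (K+1)) := mul_nonneg (by linarith) ht
        linarith [q1, q2, p2, p3]
      · -- use pair (j0, K+1)
        have hj0ne' : j0 ≠ K + 1 := by
          intro h; rw [h] at hj0; linarith [ht]
        apply pairG N K φF φ2F v hN j0 (K+1) (φF + 8 * φ2F) (by omega) (by omega) (by omega) (by omega)
          hj0ne'
        rw [GR j0 (by omega) (by omega), GR (K+1) (by omega) (by omega), ← hd, hj0]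
        have p : 0 ≤ (-(d (K+1))) * (φF + 4*φ2F) := mul_nonneg (by linarith) (by linarith)
        linarith [p, h2F]
    rcases le_or_gt j1 K with c1A | c1R'
    · -- (R,A)
      apply pairG N K φF φ2F v hN j0 j1 (φF + 8 * φ2F) (by omega) (by omega) (by omega) (by omega) hj0ne
      rw [GR j0 (by omega) (by omega), GA j1 (by omega) (by omega), ← hd, hj0]
      have hb1 : d (j1-1) + 2 * d j1 + d (j1+1) ≥ 4 * d j1 := by
        have h1 := hmin (j1-1) (by omega) (by omega)
        have h2 := hmin (j1+1) (by omega) (by omega)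
        linarith
      have hgR : d K - 2 * d (K+1) + d (K+2) ≤ 2 - 2 * d j1 := by
        have := hK1min; have := hKm.2; have := hK2m.2; linarith
      have q1 : φ2F * (2 - 2*d j1) ≤ φ2F * (d K - 2*d (K+1) + d (K+2)) :=
        mul_le_mul_of_nonpos_left hgR h2F.le
      have q2 : φ2F * (d (j1-1) + 2*d j1 + d (j1+1)) ≤ φ2F * (4*d j1) :=
        mul_le_mul_of_nonpos_left hb1 h2F.le
      have p2 : 0 ≤ (-(d j1)) * (φF + 6*φ2F) := mul_nonneg (by linarith) (by linarith)
      linarith [q1, q2, p2, h2F]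
    · -- (R,R)
      apply pairG N K φF φ2F v hN j0 j1 (φF + 8 * φ2F) (by omega) (by omega) (by omega) (by omega) hj0ne
      rw [GR j0 (by omega) (by omega), GR j1 (by omega) (by omega), ← hd, hj0]
      have p : 0 ≤ (-(d j1)) * (φF + 4*φ2F) := mul_nonneg (by linarith) (by linarith)
      linarith [p, h2F]

lemma Dd_neg (N : ℤ) (v : ℤ → ℝ) (j : ℤ) : Dd N (fun i => -v i) j = -(Dd N v j) := by
  simp [Dd]; ring

lemma Dd_smul (N : ℤ) (c : ℝ) (v : ℤ → ℝ) (j : ℤ) :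
    Dd N (fun i => c * v i) j = c * Dd N v j := by
  simp [Dd]; ring

lemma Dd_sub (N : ℤ) (v w : ℤ → ℝ) (j : ℤ) :
    Dd N (fun i => v i - w i) j = Dd N v j - Dd N w j := by
  simp [Dd]; ring

lemma Lqcf_neg (N K : ℤ) (φF φ2F : ℝ) (v : ℤ → ℝ) (j : ℤ) :
    Lqcf N K φF φ2F (fun i => -v i) j = -(Lqcf N K φF φ2F v j) := by
  simp only [Lqcf, L1op, L2op]
  split_ifs with h <;> ring

lemma Lqcf_smul (N K : ℤ) (φF φ2F : ℝ) (c : ℝ) (v : ℤ → ℝ) (j : ℤ) :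
    Lqcf N K φF φ2F (fun i => c * v i) j = c * Lqcf N K φF φ2F v j := by
  simp only [Lqcf, L1op, L2op]
  split_ifs with h <;> ring

lemma Lqcf_add (N K : ℤ) (φF φ2F : ℝ) (v w : ℤ → ℝ) (j : ℤ) :
    Lqcf N K φF φ2F (fun i => v i + w i) j
      = Lqcf N K φF φ2F v j + Lqcf N K φF φ2F w j := by
  simp only [Lqcf, L1op, L2op]
  split_ifs with h <;> ring

lemma Lqcf_sub (N K : ℤ) (φF φ2F : ℝ) (v w : ℤ → ℝ) (j : ℤ) :
    Lqcf N K φF φ2F (fun i => v i - w i) j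
      = Lqcf N K φF φ2F v j - Lqcf N K φF φ2F w j := by
  simp only [Lqcf, L1op, L2op]
  split_ifs with h <;> ring

lemma dualNorm_neg (N : ℤ) (g : ℤ → ℝ) :
    dualNorm N (fun j => -g j) = dualNorm N g := by
  unfold dualNorm
  congr 1
  ext y
  constructor
  · rintro ⟨w, hw0, hw1, hnorm, rfl⟩
    refine ⟨fun i => -w i, by simp [hw0], by simp [hw1], ?_, ?_⟩
    · rw [← hnorm]
      congr 1
      apply Finset.sum_congr rfl
      intro j _; rw [Dd_neg, abs_neg]
    · congr 1
      apply Finset.sum_congr rfl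
      intro j _; ring
  · rintro ⟨w, hw0, hw1, hnorm, rfl⟩
    refine ⟨fun i => -w i, by simp [hw0], by simp [hw1], ?_, ?_⟩
    · rw [← hnorm]
      congr 1
      apply Finset.sum_congr rfl
      intro j _; rw [Dd_neg, abs_neg]
    · congr 1
      apply Finset.sum_congr rfl
      intro j _; ring

/-- The stability estimate (with attainment of `|Dv| = 1`). -/
lemma key_abs (N K : ℤ) (hN : 1 ≤ N) (hK : 2 ≤ K) (hKN : 2 * K ≤ N)
    (φF φ2F : ℝ) (hF : 0 < φF) (h2F : φ2F < 0) (hstab : 0 < φF + 8 * φ2F)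
    (v : ℤ → ℝ) (hv0 : v (-N) = 0) (hv1 : v N = 0)
    (hb : ∀ j ∈ Finset.Icc (-N+1) N, |Dd N v j| ≤ 1)
    (hex : ∃ j0 ∈ Finset.Icc (-N+1) N, |Dd N v j0| = 1) :
    (1/2) * (φF + 8 * φ2F) ≤ dualNorm N (Lqcf N K φF φ2F v) := by
  obtain ⟨j0, hj0mem, hj0⟩ := hex
  rcases (abs_eq (by norm_num : (0:ℝ) ≤ 1)).mp hj0 with h1 | h1
  · exact key_pos N K hN hK hKN φF φ2F hF h2F hstab v hv0 hv1 hb ⟨j0, hj0mem, h1⟩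
  · have hneg := key_pos N K hN hK hKN φF φ2F hF h2F hstab (fun i => -v i)
      (by simp [hv0]) (by simp [hv1])
      (by intro j hj; rw [Dd_neg, abs_neg]; exact hb j hj)
      ⟨j0, hj0mem, by rw [Dd_neg, h1]; ring⟩
    have hfun : Lqcf N K φF φ2F (fun i => -v i)
        = fun j => -(Lqcf N K φF φ2F v j) := by
      funext j; exact Lqcf_neg N K φF φ2F v j
    rwa [hfun, dualNorm_neg] at hneg

/-- Rigidity: a solution of the homogeneous problem vanishes. -/
lemma rigid (N K : ℤ) (hN : 1 ≤ N) (hK : 2 ≤ K) (hKN : 2 * K ≤ N)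
    (φF φ2F : ℝ) (hF : 0 < φF) (h2F : φ2F < 0) (hstab : 0 < φF + 8 * φ2F)
    (U : ℤ → ℝ) (hU0 : U (-N) = 0) (hU1 : U N = 0)
    (hint : ∀ j ∈ Finset.Icc (-N+1) (N-1), Lqcf N K φF φ2F U j = 0) :
    ∀ j ∈ Finset.Icc (-N) N, U j = 0 := by
  have hε := eps_pos hN
  have hD : ∀ j ∈ Finset.Icc (-N+1) N, Dd N U j = 0 := by
    by_contra hcon
    push_neg at hcon
    obtain ⟨jbad, hjbadmem, hjbad⟩ := hcon
    obtain ⟨jm, hjmmem, hjmmax⟩ := Finset.exists_max_image (Finset.Icc (-N+1) N)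
      (fun j => |Dd N U j|) ⟨N, by simp only [Finset.mem_Icc]; omega⟩
    set M := |Dd N U jm| with hM
    have hMpos : 0 < M := by
      have := hjmmax jbad hjbadmem
      have : 0 < |Dd N U jbad| := abs_pos.mpr hjbad
      linarith [hjmmax jbad hjbadmem]
    set v : ℤ → ℝ := fun i => (1/M) * U i with hv
    have hkey := key_abs N K hN hK hKN φF φ2F hF h2F hstab v
      (by simp [hv, hU0]) (by simp [hv, hU1])
      (by
        intro j hj
        rw [hv]
        rw [Dd_smul, abs_mul, abs_of_pos (by positivity : (0:ℝ) < 1/M)]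
        rw [div_mul_eq_mul_div, one_mul, div_le_one hMpos]
        exact hjmmax j hj)
      ⟨jm, hjmmem, by
        rw [hv, Dd_smul, abs_mul, abs_of_pos (by positivity : (0:ℝ) < 1/M), ← hM]
        field_simp⟩
    have hzero : dualNorm N (Lqcf N K φF φ2F v) ≤ 0 := by
      apply Real.sSup_le _ le_rfl
      rintro y ⟨w, hw0, hw1, hnorm, rfl⟩
      have : ∀ j ∈ Finset.Icc (-N) N, Lqcf N K φF φ2F v j * w j = 0 := by
        intro j hj
        simp only [Finset.mem_Icc] at hj
        by_cases hjin : -N+1 ≤ j ∧ j ≤ N-1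
        · have : Lqcf N K φF φ2F v j = 0 := by
            rw [hv, Lqcf_smul, hint j (by simp only [Finset.mem_Icc]; omega), mul_zero]
          rw [this, zero_mul]
        · have hjN : j = -N ∨ j = N := by omega
          rcases hjN with rfl | rfl
          · rw [hw0, mul_zero]
          · rw [hw1, mul_zero]
      rw [Finset.sum_eq_zero this, mul_zero]
    linarith [hkey, hzero, hstab]
  intro j hj
  simp only [Finset.mem_Icc] at hj
  have htel : ∑ i ∈ Finset.Icc (-N+1) j, (U i - U (i-1)) = U j - U (-N) :=
    teleD U (-N) j (by omega)
  have hzero : ∀ i ∈ Finset.Icc (-N+1) j, U i - U (i-1) = 0 := by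
    intro i hi
    simp only [Finset.mem_Icc] at hi
    rw [Dd_eq hN U i, hD i (by simp only [Finset.mem_Icc]; omega), mul_zero]
  rw [Finset.sum_eq_zero hzero] at htel
  rw [hU0] at htel
  linarith [htel.symm]

/-- Bound on the solution via the inf-sup estimate. -/
lemma sol_bound (N K : ℤ) (hN : 1 ≤ N) (hK : 2 ≤ K) (hKN : 2 * K ≤ N)
    (φF φ2F : ℝ) (hF : 0 < φF) (h2F : φ2F < 0) (hstab : 0 < φF + 8 * φ2F)
    (f U : ℤ → ℝ) (hU0 : U (-N) = 0) (hU1 : U N = 0)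
    (heq : ∀ j ∈ Finset.Icc (-N+1) (N-1), Lqcf N K φF φ2F U j = f j) :
    ∀ j ∈ Finset.Icc (-N+1) N, |Dd N U j| ≤ 2 * dualNorm N f / (φF + 8 * φ2F) := by
  have hdnn : 0 ≤ dualNorm N f := dualNorm_nonneg N hN f
  obtain ⟨jm, hjmmem, hjmmax⟩ := Finset.exists_max_image (Finset.Icc (-N+1) N)
    (fun j => |Dd N U j|) ⟨N, by simp only [Finset.mem_Icc]; omega⟩
  set M := |Dd N U jm| with hM
  rcases eq_or_lt_of_le (abs_nonneg (Dd N U jm)) with heq0 | hMpos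
  · intro j hj
    have h1 : |Dd N U j| ≤ M := hjmmax j hj
    have h2 : 0 ≤ 2 * dualNorm N f / (φF + 8 * φ2F) := by positivity
    rw [hM, ← heq0] at h1; linarith
  · rw [← hM] at hMpos
    set v : ℤ → ℝ := fun i => (1/M) * U i with hv
    have hkey := key_abs N K hN hK hKN φF φ2F hF h2F hstab v
      (by simp [hv, hU0]) (by simp [hv, hU1])
      (by
        intro j hj
        rw [hv, Dd_smul, abs_mul, abs_of_pos (by positivity : (0:ℝ) < 1/M)]
        rw [div_mul_eq_mul_div, one_mul, div_le_one hMpos]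
        exact hjmmax j hj)
      ⟨jm, hjmmem, by
        rw [hv, Dd_smul, abs_mul, abs_of_pos (by positivity : (0:ℝ) < 1/M), ← hM]
        field_simp⟩
    have hle : dualNorm N (Lqcf N K φF φ2F v) ≤ (1/M) * dualNorm N f := by
      apply Real.sSup_le _ (by positivity)
      rintro y ⟨w, hw0, hw1, hnorm, rfl⟩
      have hterm : ∀ j ∈ Finset.Icc (-N) N,
          Lqcf N K φF φ2F v j * w j = (1/M) * (f j * w j) := by
        intro j hj
        simp only [Finset.mem_Icc] at hj
        by_cases hjin : -N+1 ≤ j ∧ j ≤ N-1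
        · rw [hv, Lqcf_smul, heq j (by simp only [Finset.mem_Icc]; omega)]; ring
        · have hjN : j = -N ∨ j = N := by omega
          rcases hjN with rfl | rfl
          · rw [hw0]; ring
          · rw [hw1]; ring
      rw [Finset.sum_congr rfl hterm, ← Finset.mul_sum]
      have hmem : (eps N * ∑ j ∈ Finset.Icc (-N) N, f j * w j) ∈
          { y : ℝ | ∃ w : ℤ → ℝ, w (-N) = 0 ∧ w N = 0 ∧
            eps N * ∑ j ∈ Finset.Icc (-N+1) N, |Dd N w j| = 1 ∧
            y = eps N * ∑ j ∈ Finset.Icc (-N) N, f j * w j } :=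
        ⟨w, hw0, hw1, hnorm, rfl⟩
      have hsup : eps N * ∑ j ∈ Finset.Icc (-N) N, f j * w j ≤ dualNorm N f :=
        le_csSup (dual_bddAbove N hN f) hmem
      calc eps N * ((1/M) * ∑ j ∈ Finset.Icc (-N) N, f j * w j)
          = (1/M) * (eps N * ∑ j ∈ Finset.Icc (-N) N, f j * w j) := by ring
        _ ≤ (1/M) * dualNorm N f := by
            apply mul_le_mul_of_nonneg_left hsup (by positivity)
    have h2 : (1/2) * (φF + 8 * φ2F) ≤ dualNorm N f / M := by
      rw [show dualNorm N f / M = (1/M) * dualNorm N f from by ring]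
      exact le_trans hkey hle
    have h3 : (1/2) * (φF + 8 * φ2F) * M ≤ dualNorm N f := (le_div_iff₀ hMpos).mp h2
    intro j hj
    have h1 : |Dd N U j| ≤ M := hjmmax j hj
    rw [le_div_iff₀ hstab]
    nlinarith [h3, h1]


/-- Stability of the force-based QC operator: if `φ''_F > 0 > φ''_{2F}` and
`φ''_F + 8φ''_{2F} > 0`, then the `ℓ∞`-`ℓ¹` inf-sup constant of `L^{qcf}` is at
least `(φ''_F + 8φ''_{2F})/2`, and for every `f` the system `L^{qcf}u = f`,
`u ∈ V₀`, has a unique solution satisfying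
`‖Du‖_{ℓ∞} ≤ 2‖f‖_* / (φ''_F + 8φ''_{2F})`. -/
theorem Lqcf_infsup_stability (N K : ℤ) (hN : 1 ≤ N) (hK : 2 ≤ K) (hKN : 2 * K ≤ N)
    (φF φ2F : ℝ) (hF : 0 < φF) (h2F : φ2F < 0) (hstab : 0 < φF + 8 * φ2F) :
    (1/2) * (φF + 8 * φ2F) ≤
      sInf { x : ℝ | ∃ v : ℤ → ℝ, v (-N) = 0 ∧ v N = 0 ∧
        (∀ j ∈ Finset.Icc (-N+1) N, |Dd N v j| ≤ 1) ∧
        (∃ j ∈ Finset.Icc (-N+1) N, |Dd N v j| = 1) ∧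
        x = dualNorm N (Lqcf N K φF φ2F v) } ∧
    ∀ f : ℤ → ℝ, ∃ u : ℤ → ℝ,
      (u (-N) = 0 ∧ u N = 0 ∧
        (∀ j ∈ Finset.Icc (-N+1) (N-1), Lqcf N K φF φ2F u j = f j) ∧
        (∀ j ∈ Finset.Icc (-N+1) N,
          |Dd N u j| ≤ 2 * dualNorm N f / (φF + 8 * φ2F))) ∧
      ∀ u' : ℤ → ℝ, u' (-N) = 0 → u' N = 0 →
        (∀ j ∈ Finset.Icc (-N+1) (N-1), Lqcf N K φF φ2F u' j = f j) →
        ∀ j ∈ Finset.Icc (-N) N, u' j = u j := by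
  have hε := eps_pos hN
  constructor
  · -- the inf-sup bound
    apply le_csInf
    · -- nonemptiness, via the hat function
      set vhat : ℤ → ℝ := fun j => eps N * ((N:ℝ) - |(j:ℝ)|) with hvhat
      have hDd : ∀ j : ℤ, Dd N vhat j = |(j:ℝ) - 1| - |(j:ℝ)| := by
        intro j
        have : ((j - 1 : ℤ) : ℝ) = (j:ℝ) - 1 := by push_cast; ring
        simp only [Dd, hvhat, this]
        field_simp
        ring
      have habs : ∀ j : ℤ, |Dd N vhat j| = 1 := by
        intro j
        rw [hDd j]
        rcases le_or_gt 1 j with h | h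
        · have h1 : (1:ℝ) ≤ (j:ℝ) := by exact_mod_cast h
          rw [abs_of_nonneg (by linarith : (0:ℝ) ≤ (j:ℝ) - 1),
            abs_of_nonneg (by linarith : (0:ℝ) ≤ (j:ℝ))]
          norm_num
        · have h1 : (j:ℝ) ≤ 0 := by exact_mod_cast (by omega : j ≤ 0)
          rw [abs_of_nonpos (by linarith : (j:ℝ) - 1 ≤ 0),
            abs_of_nonpos h1]
          rw [abs_of_nonneg (by linarith : (0:ℝ) ≤ -((j:ℝ)-1) - -(j:ℝ))]
          ring
      refine ⟨dualNorm N (Lqcf N K φF φ2F vhat), vhat, ?_, ?_, ?_, ?_, rfl⟩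
      · have : ((-N : ℤ) : ℝ) = -(N:ℝ) := by push_cast; ring
        rw [hvhat]; simp only [this]
        rw [abs_neg, abs_of_nonneg (by exact_mod_cast (by omega : (0:ℤ) ≤ N) : (0:ℝ) ≤ (N:ℝ))]
        ring
      · rw [hvhat]; simp only
        rw [abs_of_nonneg (by exact_mod_cast (by omega : (0:ℤ) ≤ N) : (0:ℝ) ≤ (N:ℝ))]
        ring
      · intro j _; rw [habs j]
      · exact ⟨N, by simp only [Finset.mem_Icc]; omega, habs N⟩
    · -- the lower bound
      rintro x ⟨v, h0, h1, hb, hex, rfl⟩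
      exact key_abs N K hN hK hKN φF φ2F hF h2F hstab v h0 h1 hb hex
  · -- solvability
    intro f
    classical
    set Isub := Finset.Icc (-N+1 : ℤ) (N-1) with hIsub
    set E : (↥Isub → ℝ) → ℤ → ℝ :=
      fun u j => if h : j ∈ Isub then u ⟨j, h⟩ else 0 with hE
    have hEadd : ∀ u u' : ↥Isub → ℝ, E (u + u') = fun j => E u j + E u' j := by
      intro u u'; funext j; rw [hE]; simp only
      split <;> simp
    have hEsmul : ∀ (c : ℝ) (u : ↥Isub → ℝ), E (c • u) = fun j => c * E u j := by
      intro c u; funext j; rw [hE]; simp only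
      split <;> simp
    set T : (↥Isub → ℝ) →ₗ[ℝ] (↥Isub → ℝ) :=
      { toFun := fun u x => Lqcf N K φF φ2F (E u) x.1
        map_add' := by
          intro u u'; funext x
          show Lqcf N K φF φ2F (E (u + u')) x.1
            = Lqcf N K φF φ2F (E u) x.1 + Lqcf N K φF φ2F (E u') x.1
          rw [hEadd u u']
          exact Lqcf_add N K φF φ2F (E u) (E u') x.1
        map_smul' := by
          intro c u; funext x
          show Lqcf N K φF φ2F (E (c • u)) x.1 = c * Lqcf N K φF φ2F (E u) x.1
          rw [hEsmul c u]
          exact Lqcf_smul N K φF φ2F c (E u) x.1 } with hT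
    have hEbdry : ∀ u : ↥Isub → ℝ, E u (-N) = 0 ∧ E u N = 0 := by
      intro u
      constructor
      · exact dif_neg (show (-N) ∉ Isub by
          rw [hIsub]; simp only [Finset.mem_Icc]; omega)
      · exact dif_neg (show N ∉ Isub by
          rw [hIsub]; simp only [Finset.mem_Icc]; omega)
    have hinj : Function.Injective T := by
      rw [injective_iff_map_eq_zero]
      intro u hu
      have hbdry := hEbdry u
      have hint : ∀ j ∈ Finset.Icc (-N+1) (N-1), Lqcf N K φF φ2F (E u) j = 0 := by
        intro j hj
        have := congrFun hu ⟨j, by rw [hIsub]; exact hj⟩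
        exact this
      have hzero := rigid N K hN hK hKN φF φ2F hF h2F hstab (E u)
        hbdry.1 hbdry.2 hint
      funext x
      have hx2 : -N+1 ≤ (x : ℤ) ∧ (x : ℤ) ≤ N-1 := Finset.mem_Icc.mp x.2
      have hx1 : (x : ℤ) ∈ Finset.Icc (-N) N := by
        simp only [Finset.mem_Icc]; omega
      have h0 := hzero x.1 hx1
      have h1 : u x = (0:ℝ) := by
        have h2 : E u (x : ℤ) = u x := dif_pos x.2
        rw [← h2]; exact h0
      simpa using h1
    have hsurj : Function.Surjective T := LinearMap.injective_iff_surjective.mp hinj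
    obtain ⟨u, hu⟩ := hsurj (fun x => f x.1)
    set U := E u with hU
    have hbdry := hEbdry u
    have heqU : ∀ j ∈ Finset.Icc (-N+1) (N-1), Lqcf N K φF φ2F U j = f j := by
      intro j hj
      have := congrFun hu ⟨j, by rw [hIsub]; exact hj⟩
      exact this
    refine ⟨U, ⟨hbdry.1, hbdry.2, heqU, ?_⟩, ?_⟩
    · exact sol_bound N K hN hK hKN φF φ2F hF h2F hstab f U hbdry.1 hbdry.2 heqU
    · -- uniqueness
      intro u' h0' h1' heq' j hj
      have hint : ∀ i ∈ Finset.Icc (-N+1) (N-1),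
          Lqcf N K φF φ2F (fun x => u' x - U x) i = 0 := by
        intro i hi
        rw [Lqcf_sub, heq' i hi, heqU i hi, sub_self]
      have hrig := rigid N K hN hK hKN φF φ2F hF h2F hstab (fun x => u' x - U x)
        (by show u' (-N) - U (-N) = 0; rw [h0', hU]; rw [hbdry.1]; ring)
        (by show u' N - U N = 0; rw [h1', hU]; rw [hbdry.2]; ring) hint j hj
      have h2 : u' j - U j = 0 := hrig
      linarith [h2]
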